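/- In the setting of Proposition 5.1, if additionally (m+1)(Δ − s + 1) ≥ δ, then deg(R/T) = δ·s exactly; i.e., the monomials y_0^i z_0^j with 0 ≤ i ≤ s−1, 0 ≤ j ≤ δ−1 form a K(Q)-basis of (R/T) ⊗_Q K(Q). -/

import Mathlib

set_option synthInstance.maxHeartbeats 1000000
set_option maxHeartbeats 1000000

open MvPolynomial

open MvPolynomial

lemma aux1 {F : Type*} [Field F] (s m Δ δ : ℕ) (a : Fin (s+1) → F)
    (has : a (Fin.last s) ≠ 0) (hΔ : s ≤ Δ) (hextra : δ ≤ (m+1)*(Δ - s + 1)) :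
    (X 0 : MvPolynomial (Fin 2) F)^Δ ∈ Ideal.span
      {(∑ i : Fin (s+1), MvPolynomial.C (a i) * X 0 ^ (i:ℕ) * X 1 ^ ((m+1)*(s-(i:ℕ)))),
        (X 1 : MvPolynomial (Fin 2) F)^δ} := by
  set Gp : MvPolynomial (Fin 2) F :=
    ∑ i : Fin (s+1), MvPolynomial.C (a i) * X 0 ^ (i:ℕ) * X 1 ^ ((m+1)*(s-(i:ℕ))) with hGp
  set I : Ideal (MvPolynomial (Fin 2) F) := Ideal.span {Gp, (X 1 : MvPolynomial (Fin 2) F)^δ}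
    with hI
  have hz : ∀ n j : ℕ, δ ≤ j → (X 0 : MvPolynomial (Fin 2) F)^n * X 1 ^ j ∈ I := by
    intro n j hj
    have : (X 0 : MvPolynomial (Fin 2) F)^n * X 1 ^ j
        = ((X 0 : MvPolynomial (Fin 2) F)^n * X 1 ^ (j - δ)) * X 1 ^ δ := by
      rw [mul_assoc, ← pow_add]
      congr 2
      omega
    rw [this]
    exact Ideal.mul_mem_left _ _ (Ideal.subset_span (by simp))
  have hGmem : Gp ∈ I := Ideal.subset_span (by simp)
  have hu : IsUnit (MvPolynomial.C (a (Fin.last s)) : MvPolynomial (Fin 2) F) :=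
    (isUnit_iff_ne_zero.mpr has).map (C : F →+* MvPolynomial (Fin 2) F)
  have hdecomp : Gp = (∑ i : Fin s, MvPolynomial.C (a i.castSucc) * X 0 ^ (i:ℕ)
        * X 1 ^ ((m+1)*(s-(i:ℕ)))) + MvPolynomial.C (a (Fin.last s)) * X 0 ^ s := by
    rw [hGp, Fin.sum_univ_castSucc]
    simp
  have key : ∀ r : ℕ, ∀ j : ℕ, δ ≤ j + (m+1)*(r+1) →
      (X 0 : MvPolynomial (Fin 2) F)^(s+r) * X 1 ^ j ∈ I := by
    intro r
    induction r using Nat.strong_induction_on with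
    | _ r IH =>
      intro j hj
      have expand : (X 0 : MvPolynomial (Fin 2) F)^r * X 1 ^ j * Gp
          = MvPolynomial.C (a (Fin.last s)) * ((X 0 : MvPolynomial (Fin 2) F)^(s+r) * X 1 ^ j)
            + ∑ i : Fin s, MvPolynomial.C (a i.castSucc) *
              ((X 0 : MvPolynomial (Fin 2) F)^(r+(i:ℕ)) * X 1 ^ (j + (m+1)*(s-(i:ℕ)))) := by
        rw [hdecomp, mul_add, Finset.mul_sum]
        rw [add_comm]
        congr 1
        · rw [pow_add]; ring
        · refine Finset.sum_congr rfl fun i _ => ?_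
          rw [pow_add, pow_add]; ring
      have hsub : MvPolynomial.C (a (Fin.last s)) * ((X 0 : MvPolynomial (Fin 2) F)^(s+r) * X 1 ^ j)
          = (X 0 : MvPolynomial (Fin 2) F)^r * X 1 ^ j * Gp
            - ∑ i : Fin s, MvPolynomial.C (a i.castSucc) *
              ((X 0 : MvPolynomial (Fin 2) F)^(r+(i:ℕ)) * X 1 ^ (j + (m+1)*(s-(i:ℕ)))) := by
        rw [expand]; ring
      rw [← Ideal.unit_mul_mem_iff_mem I hu, hsub]
      refine Ideal.sub_mem I (Ideal.mul_mem_left _ _ hGmem) (Ideal.sum_mem I fun i _ => ?_)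
      refine Ideal.mul_mem_left _ _ ?_
      by_cases hc : r + (i:ℕ) < s
      · apply hz
        have h1 : r + 1 ≤ s - (i:ℕ) := by omega
        have h2 : (m+1)*(r+1) ≤ (m+1)*(s-(i:ℕ)) := Nat.mul_le_mul_left _ h1
        omega
      · push_neg at hc
        have hi : (i:ℕ) < s := i.isLt
        have hr' : r + (i:ℕ) = s + (r + (i:ℕ) - s) := by omega
        rw [hr']
        apply IH (r + (i:ℕ) - s) (by omega)
        have harith : (m+1)*(s-(i:ℕ)) + (m+1)*((r + (i:ℕ) - s)+1) = (m+1)*(r+1) := by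
          rw [← Nat.mul_add]
          congr 1
          omega
        omega
  have hΔeq : Δ = s + (Δ - s) := by omega
  have := key (Δ - s) 0 (by simpa using hextra)
  rw [pow_zero, mul_one] at this
  rwa [hΔeq]


noncomputable section

variable {F : Type*} [Field F]

lemma aux2 (s δ : ℕ) (hδ : 0 < δ) (a : Fin (s+1) → F)
    (has : a (Fin.last s) ≠ 0) (ee : Fin (s+1) → ℕ) (hee : ee (Fin.last s) = 0) :
    ∃ bb : Module.Basis (Fin s × Fin δ) F
      ((MvPolynomial (Fin 2) F) ⧸ (Ideal.span
        {(∑ i : Fin (s+1), MvPolynomial.C (a i) * X 0 ^ (i:ℕ) * X 1 ^ (ee i)),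
          (X 1 : MvPolynomial (Fin 2) F)^δ})),
      ∀ p : Fin s × Fin δ,
        bb p = Ideal.Quotient.mk _ (X 0 ^ (p.1:ℕ) * X 1 ^ (p.2:ℕ)) := by
  classical
  set Gp : MvPolynomial (Fin 2) F :=
    ∑ i : Fin (s+1), MvPolynomial.C (a i) * X 0 ^ (i:ℕ) * X 1 ^ (ee i) with hGpdef
  set J : Ideal (MvPolynomial (Fin 2) F) :=
    Ideal.span {Gp, (X 1 : MvPolynomial (Fin 2) F)^δ} with hJdef
  -- the iso MvPolynomial (Fin 2) F ≃ₐ[F] (F[z])[y]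
  let inner : MvPolynomial (Fin 1) F ≃ₐ[F] Polynomial F :=
    (finSuccEquiv F 0).trans (Polynomial.mapAlgEquiv (isEmptyAlgEquiv F (Fin 0)))
  let E1 : MvPolynomial (Fin 2) F ≃ₐ[F] Polynomial (Polynomial F) :=
    (finSuccEquiv F 1).trans (Polynomial.mapAlgEquiv inner)
  have hE1X0 : E1 (X 0) = Polynomial.X := by
    simp [E1, finSuccEquiv_X_zero]
  have hE1X1 : E1 (X 1) = Polynomial.C Polynomial.X := by
    have h1 : (1 : Fin 2) = Fin.succ 0 := rfl
    rw [h1]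
    simp only [E1, AlgEquiv.trans_apply, finSuccEquiv_X_succ]
    have h0 : inner (X 0) = Polynomial.X := by
      simp [inner, finSuccEquiv_X_zero]
    simp [Polynomial.mapAlgEquiv, h0]
  have hE1C : ∀ c : F, E1 (MvPolynomial.C c) = Polynomial.C (Polynomial.C c) := by
    intro c
    rw [← MvPolynomial.algebraMap_eq, AlgEquiv.commutes]
    simp [Polynomial.algebraMap_apply]
  set P : Polynomial (Polynomial F) :=
    ∑ i : Fin (s+1), Polynomial.C (Polynomial.C (a i) * Polynomial.X ^ (ee i))
      * Polynomial.X ^ (i:ℕ) with hPdef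
  have hP : E1 Gp = P := by
    rw [hGpdef, map_sum, hPdef]
    refine Finset.sum_congr rfl fun i _ => ?_
    rw [map_mul, map_mul, map_pow, map_pow, hE1X0, hE1X1, hE1C, Polynomial.C_mul,
      Polynomial.C_pow]
    ring
  set Iz : Ideal (Polynomial F) := Ideal.span {Polynomial.X ^ δ} with hIzdef
  let Rz : Type _ := AdjoinRoot (Polynomial.X ^ δ : Polynomial F)
  let z : Rz := AdjoinRoot.root _
  haveI : Nontrivial Rz := by
    refine Ideal.Quotient.nontrivial_iff.mpr ?_
    intro htop
    rw [Ideal.span_singleton_eq_top] at htop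
    have hunit := htop
    have := Polynomial.natDegree_eq_zero_of_isUnit hunit
    rw [Polynomial.natDegree_X_pow] at this
    omega
  set u : F := a (Fin.last s) with hudef
  set zc : Fin (s+1) → Rz := fun i =>
    AdjoinRoot.mk _ (Polynomial.C (a i / u) * Polynomial.X ^ (ee i)) with hzcdef
  set Qb : Polynomial Rz :=
    ∑ i : Fin (s+1), Polynomial.C (zc i) * Polynomial.X ^ (i:ℕ) with hQbdef
  have hcoeff : ∀ n : ℕ, Qb.coeff n = if h : n < s + 1 then zc ⟨n, h⟩ else 0 := by
    intro n
    rw [hQbdef, Polynomial.finset_sum_coeff]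
    simp only [Polynomial.coeff_C_mul, Polynomial.coeff_X_pow, mul_ite, mul_one, mul_zero]
    by_cases h : n < s + 1
    · rw [dif_pos h, Finset.sum_eq_single (⟨n, h⟩ : Fin (s+1))]
      · simp
      · intro b _ hb
        rw [if_neg]
        intro hnb
        exact hb (by ext; simp [← hnb])
      · intro habs
        exact absurd (Finset.mem_univ _) habs
    · rw [dif_neg h]
      refine Finset.sum_eq_zero fun i _ => ?_
      rw [if_neg]
      intro hni
      omega
  have hzclast : zc (Fin.last s) = 1 := by
    rw [hzcdef]
    simp only [hee, pow_zero, mul_one, ← hudef, div_self has]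
    simp
  have hQtop : Qb.coeff s = 1 := by
    rw [hcoeff]
    rw [dif_pos (Nat.lt_succ_self s)]
    exact hzclast
  have hQhigh : ∀ n, s < n → Qb.coeff n = 0 := by
    intro n hn
    rw [hcoeff, dif_neg (by omega)]
  have hdegle : Qb.natDegree ≤ s := Polynomial.natDegree_le_iff_coeff_eq_zero.mpr hQhigh
  have hmono : Qb.Monic := Polynomial.monic_of_natDegree_le_of_coeff_eq_one s hdegle hQtop
  have hdeg : Qb.natDegree = s :=
    Polynomial.natDegree_eq_of_le_of_coeff_ne_zero hdegle (by rw [hQtop]; exact one_ne_zero)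
  -- bases
  let pbz := AdjoinRoot.powerBasis' (Polynomial.monic_X_pow (R := F) δ)
  have hpbzdim : pbz.dim = δ := by simp [pbz, Polynomial.natDegree_X_pow]
  let bz : Module.Basis (Fin δ) F Rz := pbz.basis.reindex (finCongr hpbzdim)
  have hbz : ∀ j : Fin δ, bz j = z ^ (j:ℕ) := by
    intro j
    rw [Module.Basis.reindex_apply, pbz.basis_eq_pow]
    simp [pbz, z]
  let pby := AdjoinRoot.powerBasis' hmono
  have hpbydim : pby.dim = s := by simp [pby, hdeg]
  let yb : Module.Basis (Fin s) Rz (AdjoinRoot Qb) := pby.basis.reindex (finCongr hpbydim)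
  have hyb : ∀ i : Fin s, yb i = AdjoinRoot.root Qb ^ (i:ℕ) := by
    intro i
    rw [Module.Basis.reindex_apply, pby.basis_eq_pow]
    simp [pby]
  haveI htower : IsScalarTower F Rz (AdjoinRoot Qb) := IsScalarTower.of_algebraMap_eq' rfl
  let big : Module.Basis (Fin δ × Fin s) F (AdjoinRoot Qb) := bz.smulTower yb
  -- ideals in Polynomial (Polynomial F)
  set I1 : Ideal (Polynomial (Polynomial F)) :=
    Ideal.span {Polynomial.C (Polynomial.X ^ δ)} with hI1def
  set I2 : Ideal (Polynomial (Polynomial F)) := Ideal.span {P} with hI2def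
  have hJ2 : I1 ⊔ I2 = J.map (E1 : MvPolynomial (Fin 2) F →+* Polynomial (Polynomial F)) := by
    rw [hJdef, Ideal.map_span, Set.image_insert_eq, Set.image_singleton]
    have h1 : (E1 : MvPolynomial (Fin 2) F →+* Polynomial (Polynomial F)) Gp = P := hP
    have h2 : (E1 : MvPolynomial (Fin 2) F →+* Polynomial (Polynomial F)) ((X 1)^δ)
        = Polynomial.C (Polynomial.X ^ δ) := by
      show E1 ((X 1)^δ) = _
      rw [map_pow, hE1X1, ← Polynomial.C_pow]
    rw [h1, h2, Ideal.span_insert, sup_comm]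
  let e1 : (MvPolynomial (Fin 2) F ⧸ J) ≃ₐ[F]
      (Polynomial (Polynomial F) ⧸ (I1 ⊔ I2)) :=
    Ideal.quotientEquivAlg J (I1 ⊔ I2) E1 hJ2
  let e2 : (Polynomial (Polynomial F) ⧸ (I1 ⊔ I2)) ≃ₐ[F]
      ((Polynomial (Polynomial F) ⧸ I1) ⧸ (I2.map (Ideal.Quotient.mk I1))) :=
    AlgEquiv.ofRingEquiv (f := (DoubleQuot.quotQuotEquivQuotSup I1 I2).symm) (fun _ => rfl)
  -- the iso (P₂ ⧸ I1) ≃ₐ[F] Polynomial Rz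
  have hIzmap : Iz.map (Polynomial.C : Polynomial F →+* Polynomial (Polynomial F)) = I1 := by
    rw [hIzdef, Ideal.map_span, Set.image_singleton, hI1def]
  let e3ring : (Polynomial (Polynomial F) ⧸ I1) ≃+* Polynomial Rz :=
    (Ideal.quotEquivOfEq hIzmap.symm).trans
      (Ideal.polynomialQuotientEquivQuotientPolynomial Iz).symm
  have he3ring : ∀ w : Polynomial (Polynomial F),
      e3ring (Ideal.Quotient.mk I1 w) = w.map (Ideal.Quotient.mk Iz) := by
    intro w
    simp only [e3ring, RingEquiv.trans_apply, Ideal.quotEquivOfEq_mk]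
    exact Ideal.polynomialQuotientEquivQuotientPolynomial_symm_mk Iz w
  let e3 : (Polynomial (Polynomial F) ⧸ I1) ≃ₐ[F] Polynomial Rz :=
    AlgEquiv.ofRingEquiv (f := e3ring) (by
      intro c
      rw [IsScalarTower.algebraMap_apply F (Polynomial (Polynomial F))
        (Polynomial (Polynomial F) ⧸ I1), Ideal.Quotient.algebraMap_eq]
      have hc : (algebraMap F (Polynomial (Polynomial F))) c
          = Polynomial.C (Polynomial.C c) := by
        simp [Polynomial.algebraMap_apply]
      rw [hc, he3ring, Polynomial.map_C]
      rfl)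
  set Pb : Polynomial Rz := P.map (AdjoinRoot.mk (Polynomial.X ^ δ)) with hPbdef
  have he3coe : ∀ x, (e3 : (Polynomial (Polynomial F) ⧸ I1) →+* Polynomial Rz) x = e3ring x :=
    fun _ => rfl
  have hmapI2 : Ideal.span {Pb}
      = (I2.map (Ideal.Quotient.mk I1)).map
        ((e3 : (Polynomial (Polynomial F) ⧸ I1) ≃ₐ[F] Polynomial Rz)
          : (Polynomial (Polynomial F) ⧸ I1) →+* Polynomial Rz) := by
    rw [hI2def, Ideal.map_span, Set.image_singleton, Ideal.map_span, Set.image_singleton]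
    congr 1
  let e3q : ((Polynomial (Polynomial F) ⧸ I1) ⧸ (I2.map (Ideal.Quotient.mk I1))) ≃ₐ[F]
      (Polynomial Rz ⧸ Ideal.span {Pb}) :=
    Ideal.quotientEquivAlg _ _ e3 hmapI2
  -- span {Pb} = span {Qb}
  have hunit' : IsUnit (Polynomial.C (algebraMap F Rz u) : Polynomial Rz) := by
    have h1 : IsUnit u := isUnit_iff_ne_zero.mpr has
    have h2 := h1.map (algebraMap F (Polynomial Rz))
    rwa [Polynomial.algebraMap_apply] at h2
  have hPbQb : Pb = Qb * Polynomial.C (algebraMap F Rz u) := by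
    rw [hPbdef, hPdef, Polynomial.map_sum, hQbdef, Finset.sum_mul]
    refine Finset.sum_congr rfl fun i _ => ?_
    rw [Polynomial.map_mul, Polynomial.map_C, Polynomial.map_pow, Polynomial.map_X,
      mul_right_comm (Polynomial.C (zc i)), ← Polynomial.C_mul]
    congr 2
    show _ = zc i * algebraMap F Rz u
    rw [hzcdef]
    rw [show algebraMap F Rz u = AdjoinRoot.mk (Polynomial.X ^ δ) (Polynomial.C u) from rfl,
      ← map_mul]
    congr 1
    rw [mul_right_comm, ← Polynomial.C_mul, div_mul_cancel₀ _ has]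
  have hspan : Ideal.span {Pb} = Ideal.span {Qb} := by
    rw [hPbQb]
    exact Ideal.span_singleton_mul_right_unit hunit' _
  let e4 : (Polynomial Rz ⧸ Ideal.span {Pb}) ≃ₐ[F] AdjoinRoot Qb :=
    Ideal.quotientEquivAlgOfEq F hspan
  let e : (MvPolynomial (Fin 2) F ⧸ J) ≃ₐ[F] AdjoinRoot Qb :=
    e1.trans (e2.trans (e3q.trans e4))
  have hquot : ∀ w : MvPolynomial (Fin 2) F,
      e (Ideal.Quotient.mk J w)
        = AdjoinRoot.mk Qb ((E1 w).map (AdjoinRoot.mk (Polynomial.X ^ δ))) := by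
    intro w
    show e4 (e3q (e2 (e1 (Ideal.Quotient.mk J w)))) = _
    have h1 : e1 (Ideal.Quotient.mk J w) = Ideal.Quotient.mk (I1 ⊔ I2) (E1 w) := rfl
    have h2 : e2 (Ideal.Quotient.mk (I1 ⊔ I2) (E1 w))
        = Ideal.Quotient.mk (I2.map (Ideal.Quotient.mk I1))
          (Ideal.Quotient.mk I1 (E1 w)) := rfl
    have h3 : e3q (Ideal.Quotient.mk (I2.map (Ideal.Quotient.mk I1))
          (Ideal.Quotient.mk I1 (E1 w)))
        = Ideal.Quotient.mk (Ideal.span {Pb}) (e3 (Ideal.Quotient.mk I1 (E1 w))) := rfl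
    rw [h1, h2, h3, show e3 (Ideal.Quotient.mk I1 (E1 w))
      = (E1 w).map (Ideal.Quotient.mk Iz) from he3ring _]
    rfl
  have hkey : ∀ (i : Fin s) (j : Fin δ),
      e (Ideal.Quotient.mk J (X 0 ^ (i:ℕ) * X 1 ^ (j:ℕ))) = bz j • yb i := by
    intro i j
    rw [hquot]
    have hE1w : E1 (X 0 ^ (i:ℕ) * X 1 ^ (j:ℕ))
        = Polynomial.X ^ (i:ℕ) * Polynomial.C Polynomial.X ^ (j:ℕ) := by
      rw [map_mul, map_pow, map_pow, hE1X0, hE1X1]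
    rw [hE1w, Polynomial.map_mul, Polynomial.map_pow, Polynomial.map_pow, Polynomial.map_X,
      Polynomial.map_C, hbz, hyb, Algebra.smul_def, map_mul, map_pow, map_pow,
      AdjoinRoot.mk_X, map_pow]
    exact mul_comm _ _
  refine ⟨(big.map e.symm.toLinearEquiv).reindex (Equiv.prodComm (Fin δ) (Fin s)), ?_⟩
  rintro ⟨i, j⟩
  rw [Module.Basis.reindex_apply, Module.Basis.map_apply]
  have hpc : (Equiv.prodComm (Fin δ) (Fin s)).symm (i, j) = (j, i) := rfl
  rw [hpc, show big (j, i) = bz j • yb i from Module.Basis.smulTower_apply _ _ _, ← hkey i j]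
  show e.symm (e _) = _
  rw [AlgEquiv.symm_apply_apply]
lemma aux3 {R : Type} [CommRing R] [IsDomain R] {κ : Type}
    (T : Ideal (MvPolynomial (Fin 2) R))
    (T' : Ideal (MvPolynomial (Fin 2) (FractionRing R)))
    (hT' : T' = T.map (MvPolynomial.map (algebraMap R (FractionRing R))))
    (w : κ → MvPolynomial (Fin 2) R)
    (bb : Module.Basis κ (FractionRing R) ((MvPolynomial (Fin 2) (FractionRing R)) ⧸ T'))
    (hbb : ∀ p, bb p = Ideal.Quotient.mk T'
      (MvPolynomial.map (algebraMap R (FractionRing R)) (w p))) :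
    ∃ b : Module.Basis κ (FractionRing R)
      (LocalizedModule (nonZeroDivisors R) ((MvPolynomial (Fin 2) R) ⧸ T)),
      ∀ p, b p = LocalizedModule.mk (Ideal.Quotient.mk T (w p)) 1 := by
  classical
  letI : Algebra (MvPolynomial (Fin 2) R) (MvPolynomial (Fin 2) (FractionRing R)) :=
    MvPolynomial.algebraMvPolynomial
  haveI hloc : IsLocalization ((nonZeroDivisors R).map (MvPolynomial.C : R →+* (MvPolynomial (Fin 2) R))) (MvPolynomial (Fin 2) (FractionRing R)) :=
    MvPolynomial.isLocalization _ _
  have halg : (algebraMap (MvPolynomial (Fin 2) R) (MvPolynomial (Fin 2) (FractionRing R)) : (MvPolynomial (Fin 2) R) →+* (MvPolynomial (Fin 2) (FractionRing R))) = MvPolynomial.map (algebraMap R (FractionRing R)) := rfl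
  let φ : (MvPolynomial (Fin 2) R) →ₐ[R] (MvPolynomial (Fin 2) (FractionRing R)) := MvPolynomial.mapAlgHom (Algebra.ofId R (FractionRing R))
  have hφ : ∀ x : (MvPolynomial (Fin 2) R), φ x = algebraMap (MvPolynomial (Fin 2) R) (MvPolynomial (Fin 2) (FractionRing R)) x := fun _ => rfl
  have hle : T ≤ T'.comap φ := by
    intro x hx
    show φ x ∈ T'
    rw [hφ, hT']
    exact Ideal.mem_map_of_mem _ hx
  let f0 : ((MvPolynomial (Fin 2) R) ⧸ T) →ₐ[R] ((MvPolynomial (Fin 2) (FractionRing R)) ⧸ T') := Ideal.quotientMapₐ T' φ hle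
  let f : ((MvPolynomial (Fin 2) R) ⧸ T) →ₗ[R] ((MvPolynomial (Fin 2) (FractionRing R)) ⧸ T') := f0.toLinearMap
  have hfmk : ∀ x : (MvPolynomial (Fin 2) R), f (Ideal.Quotient.mk T x)
      = Ideal.Quotient.mk T' (algebraMap (MvPolynomial (Fin 2) R) (MvPolynomial (Fin 2) (FractionRing R)) x) := fun _ => rfl
  have hinj : Function.Injective (algebraMap (MvPolynomial (Fin 2) R) (MvPolynomial (Fin 2) (FractionRing R))) := by
    rw [halg]
    exact MvPolynomial.map_injective _ (IsFractionRing.injective R (FractionRing R))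
  haveI : IsLocalizedModule (nonZeroDivisors R) f := by
    constructor
    · -- map_units
      intro x
      rw [Module.End.isUnit_iff]
      have ha : (algebraMap R (FractionRing R) (x : R)) ≠ 0 :=
        (IsLocalization.map_units (FractionRing R) x).ne_zero
      constructor
      · intro m n h
        simp only [Module.algebraMap_end_apply] at h
        have h' : (algebraMap R (FractionRing R) (x : R)) • m = (algebraMap R (FractionRing R) (x : R)) • n := by
          rwa [algebraMap_smul, algebraMap_smul]
        have h2 := congrArg (fun t => (algebraMap R (FractionRing R) (x : R))⁻¹ • t) h'
        simp only [smul_smul, inv_mul_cancel₀ ha, one_smul] at h2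
        exact h2
      · intro m
        refine ⟨(algebraMap R (FractionRing R) (x : R))⁻¹ • m, ?_⟩
        simp only [Module.algebraMap_end_apply]
        rw [← algebraMap_smul (FractionRing R) (x : R), smul_smul, mul_inv_cancel₀ ha, one_smul]
    · -- surj
      intro y
      obtain ⟨q, rfl⟩ := Ideal.Quotient.mk_surjective y
      obtain ⟨⟨x, sm⟩, hx⟩ := IsLocalization.surj
        (M := (nonZeroDivisors R).map (MvPolynomial.C : R →+* (MvPolynomial (Fin 2) R))) (S := (MvPolynomial (Fin 2) (FractionRing R))) q
      obtain ⟨r, hr, hrC⟩ := sm.2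
      refine ⟨⟨Ideal.Quotient.mk T x, ⟨r, hr⟩⟩, ?_⟩
      show (r : R) • (Ideal.Quotient.mk T' q) = f (Ideal.Quotient.mk T x)
      rw [hfmk]
      have hsm : (r : R) • (Ideal.Quotient.mk T' q)
          = Ideal.Quotient.mk T' ((r : R) • q) := rfl
      rw [hsm]
      congr 1
      rw [Algebra.smul_def,
        show (algebraMap R (MvPolynomial (Fin 2) (FractionRing R))) (r : R) = algebraMap (MvPolynomial (Fin 2) R) (MvPolynomial (Fin 2) (FractionRing R)) (MvPolynomial.C r) from by
          rw [halg, MvPolynomial.map_C]; rfl,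
        hrC, mul_comm]
      exact hx
    · -- exists_of_eq
      intro x y h
      obtain ⟨p, rfl⟩ := Ideal.Quotient.mk_surjective x
      obtain ⟨p', rfl⟩ := Ideal.Quotient.mk_surjective y
      rw [hfmk, hfmk] at h
      have hmem : algebraMap (MvPolynomial (Fin 2) R) (MvPolynomial (Fin 2) (FractionRing R)) p - algebraMap (MvPolynomial (Fin 2) R) (MvPolynomial (Fin 2) (FractionRing R)) p' ∈ T' := Ideal.Quotient.eq.mp h
      rw [← map_sub, hT'] at hmem
      rw [show Ideal.map (MvPolynomial.map (algebraMap R (FractionRing R))) T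
        = Ideal.map (algebraMap (MvPolynomial (Fin 2) R) (MvPolynomial (Fin 2) (FractionRing R))) T from rfl] at hmem
      rw [IsLocalization.mem_map_algebraMap_iff
        ((nonZeroDivisors R).map (MvPolynomial.C : R →+* (MvPolynomial (Fin 2) R))) (MvPolynomial (Fin 2) (FractionRing R))] at hmem
      obtain ⟨⟨t, sm⟩, ht⟩ := hmem
      obtain ⟨r, hr, hrC⟩ := sm.2
      refine ⟨⟨r, hr⟩, ?_⟩
      have h1 : ((p - p') * MvPolynomial.C r : (MvPolynomial (Fin 2) R)) = t := by
        apply hinj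
        rw [map_mul, hrC]
        exact ht
      have h2 : (r : R) • (p - p') ∈ T := by
        rw [Algebra.smul_def]
        rw [show algebraMap R (MvPolynomial (Fin 2) R) r = MvPolynomial.C r from rfl]
        rw [mul_comm, h1]
        exact t.2
      show (r : R) • (Ideal.Quotient.mk T p) = (r : R) • (Ideal.Quotient.mk T p')
      rw [show (r : R) • (Ideal.Quotient.mk T p) = Ideal.Quotient.mk T ((r:R) • p) from rfl,
        show (r : R) • (Ideal.Quotient.mk T p') = Ideal.Quotient.mk T ((r:R) • p') from rfl]
      rw [Ideal.Quotient.eq, ← smul_sub]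
      exact h2
  let e0 := IsLocalizedModule.iso (nonZeroDivisors R) f
  let eA : LocalizedModule (nonZeroDivisors R) ((MvPolynomial (Fin 2) R) ⧸ T) ≃ₗ[(FractionRing R)] ((MvPolynomial (Fin 2) (FractionRing R)) ⧸ T') :=
    LinearEquiv.ofLinear (e0.toLinearMap.extendScalarsOfIsLocalization (nonZeroDivisors R) (FractionRing R))
      (e0.symm.toLinearMap.extendScalarsOfIsLocalization (nonZeroDivisors R) (FractionRing R))
      (by ext x; simp) (by ext x; simp)
  refine ⟨bb.map eA.symm, ?_⟩
  intro p
  have hfmk' : ∀ x : MvPolynomial (Fin 2) R, f (Ideal.Quotient.mk T x)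
      = Ideal.Quotient.mk T' (MvPolynomial.map (algebraMap R (FractionRing R)) x) :=
    fun _ => rfl
  have h1 : bb p = f (Ideal.Quotient.mk T (w p)) := by rw [hbb p, hfmk' (w p)]
  rw [Module.Basis.map_apply, h1]
  show e0.symm (f (Ideal.Quotient.mk T (w p))) = _
  exact IsLocalizedModule.iso_symm_apply' (nonZeroDivisors R) f
    (f (Ideal.Quotient.mk T (w p))) (Ideal.Quotient.mk T (w p)) 1 (one_smul _ _)

/-- In the setting of Proposition 5.1, if additionally
`(m+1)(Δ−s+1) ≥ δ`, then `deg(R/T) = δ·s` exactly: the monomials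
`y₀^i z₀^j` with `0 ≤ i ≤ s−1`, `0 ≤ j ≤ δ−1` form a `K(Q)`-basis of
`(R/T) ⊗_Q K(Q)`. -/
theorem three_generated_degree_exact
    {k : Type} [Field k] {ι : Type}
    (s m Δ δ e : ℕ)
    (g : Fin (s + 1) → MvPolynomial ι k)
    (hgs : g (Fin.last s) ≠ 0)
    (hg : ∀ i : Fin (s + 1), (g i).IsHomogeneous (m * i + e))
    (hΔ : s < Δ) (hδ : (m + 1) * s < δ)
    (hextra : δ ≤ (m + 1) * (Δ - s + 1))
    (G : MvPolynomial (Fin 2) (MvPolynomial ι k))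
    (hG : G = ∑ i : Fin (s + 1),
      MvPolynomial.C (g i) * (X 0) ^ (i : ℕ) * (X 1) ^ ((m + 1) * (s - (i : ℕ))))
    (T : Ideal (MvPolynomial (Fin 2) (MvPolynomial ι k)))
    (hT : T = Ideal.span {G, (X 0) ^ Δ, (X 1) ^ δ}) :
    ∃ b : Module.Basis (Fin s × Fin δ) (FractionRing (MvPolynomial ι k))
      (LocalizedModule (nonZeroDivisors (MvPolynomial ι k))
        (MvPolynomial (Fin 2) (MvPolynomial ι k) ⧸ T)),
      ∀ p : Fin s × Fin δ,
        b p = LocalizedModule.mk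
          (Ideal.Quotient.mk T ((X 0) ^ (p.1 : ℕ) * (X 1) ^ (p.2 : ℕ))) 1 := by
  classical
  have hδ0 : 0 < δ := lt_of_le_of_lt (Nat.zero_le _) hδ
  let a : Fin (s+1) → FractionRing (MvPolynomial ι k) :=
    fun i => algebraMap (MvPolynomial ι k) (FractionRing (MvPolynomial ι k)) (g i)
  have has : a (Fin.last s) ≠ 0 := by
    intro h
    exact hgs ((map_eq_zero_iff _
      (IsFractionRing.injective (MvPolynomial ι k) (FractionRing (MvPolynomial ι k)))).mp h)
  obtain ⟨bb, hbb⟩ := aux2 s δ hδ0 a has (fun i => (m+1)*(s-(i:ℕ))) (by simp)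
  have hT' : Ideal.span {(∑ i : Fin (s+1), MvPolynomial.C (a i) * X 0 ^ (i:ℕ)
        * X 1 ^ ((m+1)*(s-(i:ℕ)))),
      (X 1 : MvPolynomial (Fin 2) (FractionRing (MvPolynomial ι k)))^δ}
      = T.map (MvPolynomial.map
        (algebraMap (MvPolynomial ι k) (FractionRing (MvPolynomial ι k)))) := by
    rw [hT, Ideal.map_span, Set.image_insert_eq, Set.image_insert_eq, Set.image_singleton]
    have h0 : (MvPolynomial.map
        (algebraMap (MvPolynomial ι k) (FractionRing (MvPolynomial ι k)))) G
        = ∑ i : Fin (s+1), MvPolynomial.C (a i) * X 0 ^ (i:ℕ) * X 1 ^ ((m+1)*(s-(i:ℕ))) := by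
      rw [hG, map_sum]
      refine Finset.sum_congr rfl fun i _ => ?_
      rw [map_mul, map_mul, map_pow, map_pow, MvPolynomial.map_C, MvPolynomial.map_X,
        MvPolynomial.map_X]
    have h1 : (MvPolynomial.map
        (algebraMap (MvPolynomial ι k) (FractionRing (MvPolynomial ι k)))) ((X 0)^Δ)
        = (X 0 : MvPolynomial (Fin 2) (FractionRing (MvPolynomial ι k)))^Δ := by
      rw [map_pow, MvPolynomial.map_X]
    have h2 : (MvPolynomial.map
        (algebraMap (MvPolynomial ι k) (FractionRing (MvPolynomial ι k)))) ((X 1)^δ)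
        = (X 1 : MvPolynomial (Fin 2) (FractionRing (MvPolynomial ι k)))^δ := by
      rw [map_pow, MvPolynomial.map_X]
    rw [h0, h1, h2]
    apply le_antisymm
    · refine Ideal.span_mono ?_
      intro t ht
      simp only [Set.mem_insert_iff, Set.mem_singleton_iff] at ht ⊢
      tauto
    · rw [Ideal.span_le]
      rintro x hx
      simp only [Set.mem_insert_iff, Set.mem_singleton_iff] at hx
      rcases hx with rfl | rfl | rfl
      · exact Ideal.subset_span (by simp)
      · exact aux1 s m Δ δ a has (le_of_lt hΔ) hextra
      · exact Ideal.subset_span (by simp)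
  obtain ⟨b, hb⟩ := aux3 T (Ideal.span {(∑ i : Fin (s+1), MvPolynomial.C (a i) * X 0 ^ (i:ℕ)
        * X 1 ^ ((m+1)*(s-(i:ℕ)))),
      (X 1 : MvPolynomial (Fin 2) (FractionRing (MvPolynomial ι k)))^δ}) hT'
    (fun p : Fin s × Fin δ => (X 0) ^ (p.1 : ℕ) * (X 1) ^ (p.2 : ℕ)) bb
    (fun p => by
      rw [hbb p]
      congr 1
      rw [map_mul, map_pow, map_pow, MvPolynomial.map_X, MvPolynomial.map_X])
  exact ⟨b, hb⟩
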